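/- Let (M,g) be a Riemannian manifold, H a hypersurface with Fermi normal coordinate x_n and dual fiber coordinate ξ_n, p = |ξ|²_g, and C₁ = sup_{S*M} |H_p ξ_n|. Then along any unit-speed geodesic lift (x(t),ξ(t)) = exp(tH_p)(ζ) one has ẋ_n(t) = 2ξ_n(t) and |ξ_n(t) − ξ_n(0)| ≤ C₁|t|; consequently, every point ζ₀ ∈ S*M with 0 < |x_n(ζ₀)| ≤ (1/(3C₁))·|ξ_n(ζ₀)|² lies on the orbit segment {exp(tH_p)(ζ) : |t| < C₁^{-1}|ξ_n(ζ)|} of some ζ ∈ S*_H M, and the map Ψ(t,ζ) = exp(tH_p)(ζ) is injective on {(t,ζ) ∈ ℝ × S*_H M : |t| < C₁^{-1}|ξ_n(ζ)|}. -/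

import Mathlib

open MeasureTheory Set Filter Topology

private lemma lip_abs {C₁ : ℝ} (hC₁ : 0 < C₁) {g : ℝ → ℝ}
    (hg : LipschitzWith (Real.toNNReal C₁) g) (s c : ℝ) :
    |g s - g c| ≤ C₁ * |s - c| := by
  have h := hg.dist_le_mul s c
  rwa [Real.dist_eq, Real.dist_eq, Real.coe_toNNReal _ hC₁.le] at h

private lemma rolle_key {C₁ : ℝ} (hC₁ : 0 < C₁) (f g : ℝ → ℝ)
    (hf : ∀ t, HasDerivAt f (2 * g t) t)
    (hg : LipschitzWith (Real.toNNReal C₁) g)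
    {s₁ s₂ : ℝ} (h12 : s₁ < s₂) (h1 : f s₁ = 0) (h2 : f s₂ = 0)
    (hb1 : C₁ * |s₁| < |g s₁|) (hb2 : C₁ * |s₂| < |g s₂|) : False := by
  obtain ⟨c, hc, hc0⟩ := exists_hasDerivAt_eq_zero (f := f) (f' := fun t => 2 * g t) h12
      (fun t _ => (hf t).continuousAt.continuousWithinAt) (h1.trans h2.symm)
      (fun x _ => hf x)
  have hgc : g c = 0 := by linarith
  have e1 : |g s₁| ≤ C₁ * (c - s₁) := by
    have h := lip_abs hC₁ hg s₁ c
    rwa [hgc, sub_zero, abs_of_nonpos (by linarith [hc.1] : s₁ - c ≤ 0), neg_sub] at h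
  have e2 : |g s₂| ≤ C₁ * (s₂ - c) := by
    have h := lip_abs hC₁ hg s₂ c
    rwa [hgc, sub_zero, abs_of_nonneg (by linarith [hc.2] : (0:ℝ) ≤ s₂ - c)] at h
  have A : |s₁| < c - s₁ := (mul_lt_mul_iff_right₀ hC₁).mp (hb1.trans_le e1)
  have B : |s₂| < s₂ - c := (mul_lt_mul_iff_right₀ hC₁).mp (hb2.trans_le e2)
  linarith [neg_abs_le s₁, le_abs_self s₂]

private lemma partC_pos {X : Type*} [MetricSpace X]
    (φ : Flow ℝ X) (xn ξn : X → ℝ)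
    (C₁ : ℝ) (hC₁ : 0 < C₁)
    (hderiv : ∀ (ρ : X) (t : ℝ),
      HasDerivAt (fun s : ℝ => xn (φ.toFun s ρ)) (2 * ξn (φ.toFun t ρ)) t)
    (hLip : ∀ ρ : X, LipschitzWith (Real.toNNReal C₁) (fun t : ℝ => ξn (φ.toFun t ρ)))
    (ζ₀ : X) (hb : 0 < ξn ζ₀) (h1 : 0 < |xn ζ₀|)
    (h2 : |xn ζ₀| ≤ (1 / (3 * C₁)) * (ξn ζ₀) ^ 2) :
    ∃ (ζ : X) (t : ℝ), xn ζ = 0 ∧ |t| < C₁⁻¹ * |ξn ζ| ∧ φ.toFun t ζ = ζ₀ := by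
  set b := ξn ζ₀ with hbdef
  set r := b / (2 * C₁) with hrdef
  have hr : 0 < r := by positivity
  set f : ℝ → ℝ := fun s => xn (φ.toFun s ζ₀) with hfdef
  set g : ℝ → ℝ := fun s => ξn (φ.toFun s ζ₀) with hgdef
  have hf0 : f 0 = xn ζ₀ := by simp [hfdef, φ.map_zero_apply]
  have hg0 : g 0 = b := by simp [hgdef, hbdef, φ.map_zero_apply]
  have hglb : ∀ s : ℝ, |s| ≤ r → b / 2 ≤ g s := by
    intro s hs
    have h := lip_abs hC₁ (hLip ζ₀) s 0
    rw [sub_zero] at h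
    have : |g s - b| ≤ C₁ * r := by
      rw [← hg0]
      exact h.trans (by nlinarith)
    have habs := abs_le.mp this
    have : C₁ * r = b / 2 := by rw [hrdef]; field_simp
    linarith [habs.1]
  have hfd : ∀ t : ℝ, HasDerivAt f (2 * g t) t := fun t => hderiv ζ₀ t
  have hfc : Continuous f := by
    rw [continuous_iff_continuousAt]; exact fun t => (hfd t).continuousAt
  have hb2pos : (0:ℝ) < b ^ 2 := pow_pos hb 2
  have e3 : b * r = b ^ 2 / (2 * C₁) := by rw [hrdef]; ring
  have e4 : (0:ℝ) < b ^ 2 / (2 * C₁) - (1 / (3 * C₁)) * b ^ 2 := by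
    have h6 : b ^ 2 / (2 * C₁) - (1 / (3 * C₁)) * b ^ 2 = b ^ 2 / (6 * C₁) := by ring
    rw [h6]; exact div_pos hb2pos (by linarith)
  -- f r > 0
  have hfr : 0 < f r := by
    obtain ⟨c, hc, hcs⟩ := exists_hasDerivAt_eq_slope f (fun t => 2 * g t) hr
      hfc.continuousOn (fun x _ => hfd x)
    have hgc : b / 2 ≤ g c := hglb c (by
      rw [abs_of_nonneg hc.1.le]; exact hc.2.le)
    have hfr0 : f r - f 0 = 2 * g c * r := by
      rw [sub_zero] at hcs
      rw [hcs, div_mul_cancel₀ _ hr.ne']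
    have e1 : b * r ≤ 2 * g c * r := by nlinarith
    have e2 : -((1 / (3 * C₁)) * b ^ 2) ≤ f 0 := by
      rw [hf0]; linarith [neg_abs_le (xn ζ₀)]
    linarith
  -- f (-r) < 0
  have hfnr : f (-r) < 0 := by
    obtain ⟨c, hc, hcs⟩ := exists_hasDerivAt_eq_slope f (fun t => 2 * g t)
      (by linarith : -r < 0) hfc.continuousOn (fun x _ => hfd x)
    have hgc : b / 2 ≤ g c := hglb c (by
      rw [abs_of_nonpos hc.2.le]; linarith [hc.1])
    have hfr0 : f 0 - f (-r) = 2 * g c * r := by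
      have h0 : (0 : ℝ) - -r = r := by ring
      rw [h0] at hcs
      field_simp at hcs
      linarith [hcs]
    have e1 : b * r ≤ 2 * g c * r := by nlinarith
    have e2 : f 0 ≤ (1 / (3 * C₁)) * b ^ 2 := by
      rw [hf0]; linarith [le_abs_self (xn ζ₀)]
    linarith
  -- IVT
  have hsub : Ioo (f (-r)) (f r) ⊆ f '' Ioo (-r) r :=
    intermediate_value_Ioo (by linarith) hfc.continuousOn
  obtain ⟨t₀, ht₀, hft₀⟩ := hsub ⟨hfnr, hfr⟩
  have ht₀r : |t₀| < r := abs_lt.mpr ⟨ht₀.1, ht₀.2⟩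
  have hgt₀ : b / 2 ≤ g t₀ := hglb t₀ ht₀r.le
  refine ⟨φ.toFun t₀ ζ₀, -t₀, hft₀, ?_, ?_⟩
  · have hξ : ξn (φ.toFun t₀ ζ₀) = g t₀ := rfl
    rw [hξ, abs_neg, abs_of_pos (by linarith : 0 < g t₀)]
    rw [lt_inv_mul_iff₀ hC₁]
    calc C₁ * |t₀| < C₁ * r := by exact (mul_lt_mul_iff_right₀ hC₁).mpr ht₀r
      _ = b / 2 := by rw [hrdef]; field_simp
      _ ≤ g t₀ := hgt₀
  · rw [← φ.map_add]; simp [φ.map_zero_apply]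

theorem stmt_9 {X : Type*} [MetricSpace X] [CompactSpace X]
    (φ : Flow ℝ X) (xn ξn : X → ℝ) (hxn : Continuous xn) (hξn : Continuous ξn)
    (C₁ : ℝ) (hC₁ : 0 < C₁)
    (hderiv : ∀ (ρ : X) (t : ℝ),
      HasDerivAt (fun s : ℝ => xn (φ.toFun s ρ)) (2 * ξn (φ.toFun t ρ)) t)
    (hLip : ∀ ρ : X, LipschitzWith (Real.toNNReal C₁) (fun t : ℝ => ξn (φ.toFun t ρ))) :
    (∀ (ζ : X) (t : ℝ), |ξn (φ.toFun t ζ) - ξn ζ| ≤ C₁ * |t|) ∧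
    (∀ (t₁ t₂ : ℝ) (ζ₁ ζ₂ : X), xn ζ₁ = 0 → xn ζ₂ = 0 →
      |t₁| < C₁⁻¹ * |ξn ζ₁| → |t₂| < C₁⁻¹ * |ξn ζ₂| →
      φ.toFun t₁ ζ₁ = φ.toFun t₂ ζ₂ → t₁ = t₂ ∧ ζ₁ = ζ₂) ∧
    (∀ ζ₀ : X, 0 < |xn ζ₀| → |xn ζ₀| ≤ (1 / (3 * C₁)) * (ξn ζ₀) ^ 2 →
      ∃ (ζ : X) (t : ℝ), xn ζ = 0 ∧ |t| < C₁⁻¹ * |ξn ζ| ∧ φ.toFun t ζ = ζ₀) := by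
  refine ⟨?_, ?_, ?_⟩
  · -- (a)
    intro ζ t
    have h := lip_abs hC₁ (hLip ζ) t 0
    rwa [sub_zero, φ.map_zero_apply] at h
  · -- (b)
    intro t₁ t₂ ζ₁ ζ₂ hz₁ hz₂ ht₁ ht₂ heq
    have hb₁ : φ.toFun (-t₁) (φ.toFun t₁ ζ₁) = ζ₁ := by
      rw [← φ.map_add, neg_add_cancel, φ.map_zero_apply]
    have hb₂ : φ.toFun (-t₂) (φ.toFun t₁ ζ₁) = ζ₂ := by
      rw [heq, ← φ.map_add, neg_add_cancel, φ.map_zero_apply]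
    have hteq : t₁ = t₂ := by
      by_contra hne
      have hfd : ∀ t : ℝ, HasDerivAt (fun s => xn (φ.toFun s (φ.toFun t₁ ζ₁)))
          (2 * (fun s => ξn (φ.toFun s (φ.toFun t₁ ζ₁))) t) t := fun t => hderiv _ t
      have hf1 : xn (φ.toFun (-t₁) (φ.toFun t₁ ζ₁)) = 0 := by rw [hb₁]; exact hz₁
      have hf2 : xn (φ.toFun (-t₂) (φ.toFun t₁ ζ₁)) = 0 := by rw [hb₂]; exact hz₂
      have hg1 : C₁ * |(-t₁)| < |ξn (φ.toFun (-t₁) (φ.toFun t₁ ζ₁))| := by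
        rw [hb₁, abs_neg]
        rw [lt_inv_mul_iff₀ hC₁] at ht₁; exact ht₁
      have hg2 : C₁ * |(-t₂)| < |ξn (φ.toFun (-t₂) (φ.toFun t₁ ζ₁))| := by
        rw [hb₂, abs_neg]
        rw [lt_inv_mul_iff₀ hC₁] at ht₂; exact ht₂
      rcases lt_or_gt_of_ne (show (-t₁ : ℝ) ≠ -t₂ from fun h => hne (neg_injective h)) with h | h
      · exact rolle_key hC₁ _ _ hfd (hLip _) h hf1 hf2 hg1 hg2
      · exact rolle_key hC₁ _ _ hfd (hLip _) h hf2 hf1 hg2 hg1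
    refine ⟨hteq, ?_⟩
    rw [← hb₁, ← hb₂, hteq]
  · -- (c)
    intro ζ₀ h1 h2
    have hbne : ξn ζ₀ ≠ 0 := by
      intro h
      rw [h] at h2; simp at h2; simp [h2] at h1
    rcases hbne.lt_or_gt with hneg | hpos
    · -- apply to -xn, -ξn
      have hd' : ∀ (ρ : X) (t : ℝ),
          HasDerivAt (fun s : ℝ => -xn (φ.toFun s ρ)) (2 * -ξn (φ.toFun t ρ)) t := by
        intro ρ t
        have := (hderiv ρ t).neg
        rw [mul_neg]; exact this
      have hL' : ∀ ρ : X, LipschitzWith (Real.toNNReal C₁)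
          (fun t : ℝ => -ξn (φ.toFun t ρ)) := by
        intro ρ
        intro a b
        have := (hLip ρ) a b
        simpa [edist_dist, Real.dist_eq, abs_sub_comm, neg_sub_neg] using this
      obtain ⟨ζ, t, hζ, ht, hφ⟩ := partC_pos φ (fun x => -xn x) (fun x => -ξn x) C₁ hC₁
        hd' hL' ζ₀ (by simpa using hneg) (by simpa using h1) (by simpa using h2)
      exact ⟨ζ, t, by simpa using hζ, by simpa using ht, hφ⟩
    · exact partC_pos φ xn ξn C₁ hC₁ hderiv hLip ζ₀ hpos h1 h2
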